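/- Let p be an odd prime and s = (s_1,…,s_d) ∈ ℕ^d with d even and weight w = s_1 + … + s_d. Then in ℤ/pℤ: T_p(s_d,…,s_1) = (−1)^w · T_p(s_1,…,s_d) and S_p(s_d,…,s_1) = (−1)^w · S_p(s_1,…,s_d). -/

import Mathlib

open Finset

/-- `T_p(s) ∈ ℤ/pℤ`: the sum over integers `p > n_1 > … > n_d > 0` with
`n_j ≡ d - j + 1 (mod 2)` (for `1 ≤ j ≤ d`), of `∏_j n_j^{-s_j}`.
Indices here are 0-based, so the parity condition reads `n_j ≡ d - j (mod 2)`. -/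
def Tp (p d : ℕ) (s : Fin d → ℕ) : ZMod p :=
  ∑ m ∈ univ.filter (fun m : Fin d → Fin p =>
      (∀ i j : Fin d, i < j → (m j : ℕ) < (m i : ℕ)) ∧
      (∀ j, 0 < (m j : ℕ)) ∧
      (∀ j : Fin d, (m j : ℕ) % 2 = (d - (j : ℕ)) % 2)),
    ∏ j, (((m j : ℕ) : ZMod p))⁻¹ ^ (s j)

/-- `S_p(s) ∈ ℤ/pℤ`: the sum over integers `p > n_1 > … > n_d > 0` with
`n_j ≡ d - j (mod 2)` (for `1 ≤ j ≤ d`), of `∏_j n_j^{-s_j}`.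
Indices here are 0-based, so the parity condition reads `n_j ≡ d - j - 1 (mod 2)`. -/
def Sp (p d : ℕ) (s : Fin d → ℕ) : ZMod p :=
  ∑ m ∈ univ.filter (fun m : Fin d → Fin p =>
      (∀ i j : Fin d, i < j → (m j : ℕ) < (m i : ℕ)) ∧
      (∀ j, 0 < (m j : ℕ)) ∧
      (∀ j : Fin d, (m j : ℕ) % 2 = (d - (j : ℕ) - 1) % 2)),
    ∏ j, (((m j : ℕ) : ZMod p))⁻¹ ^ (s j)

/-- For an odd prime `p`, even depth `d` and positive integers `s_1, …, s_d` with
weight `w = s_1 + ⋯ + s_d`: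
`T_p(s_d, …, s_1) = (-1)^w T_p(s_1, …, s_d)` and
`S_p(s_d, …, s_1) = (-1)^w S_p(s_1, …, s_d)`. -/

lemma key (p : ℕ) (hp : p.Prime) (hodd : p % 2 = 1) (d : ℕ) (s : Fin d → ℕ)
    (c c' : Fin d → ℕ) (hc2 : ∀ j, c j < 2)
    (hc : ∀ j : Fin d, (c j.rev + 1) % 2 = c' j) :
    ∑ m ∈ univ.filter (fun m : Fin d → Fin p =>
        (∀ i j : Fin d, i < j → (m j : ℕ) < (m i : ℕ)) ∧
        (∀ j, 0 < (m j : ℕ)) ∧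
        (∀ j : Fin d, (m j : ℕ) % 2 = c' j)),
      ∏ j, (((m j : ℕ) : ZMod p))⁻¹ ^ (s j.rev)
    = (-1 : ZMod p) ^ (∑ j, s j) *
      ∑ m ∈ univ.filter (fun m : Fin d → Fin p =>
        (∀ i j : Fin d, i < j → (m j : ℕ) < (m i : ℕ)) ∧
        (∀ j, 0 < (m j : ℕ)) ∧
        (∀ j : Fin d, (m j : ℕ) % 2 = c j)),
      ∏ j, (((m j : ℕ) : ZMod p))⁻¹ ^ (s j) := by
  have hp0 : 0 < p := hp.pos
  haveI : NeZero p := ⟨hp.ne_zero⟩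
  haveI : Fact p.Prime := ⟨hp⟩
  set φ : (Fin d → Fin p) → (Fin d → Fin p) :=
    fun m j => ⟨(p - (m j.rev : ℕ)) % p, Nat.mod_lt _ hp0⟩ with hφ
  have hval : ∀ m : Fin d → Fin p, (∀ j, 0 < (m j : ℕ)) →
      ∀ j, ((φ m j : ℕ)) = p - (m j.rev : ℕ) := by
    intro m hpos j
    have h1 : (m j.rev : ℕ) < p := (m j.rev).isLt
    have h2 : 0 < (m j.rev : ℕ) := hpos j.rev
    simp only [hφ]
    exact Nat.mod_eq_of_lt (by omega)
  have hval' : ∀ m : Fin d → Fin p, (∀ j, 0 < (m j : ℕ)) →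
      ∀ j : Fin d, (p - (m j.rev : ℕ)) % p = p - (m j.rev : ℕ) := by
    intro m hpos j
    have h1 : (m j.rev : ℕ) < p := (m j.rev).isLt
    have h2 : 0 < (m j.rev : ℕ) := hpos j.rev
    exact Nat.mod_eq_of_lt (by omega)
  rw [Finset.mul_sum]
  refine Finset.sum_nbij' (i := φ) (j := φ) ?_ ?_ ?_ ?_ ?_
  · intro m hm
    simp only [mem_filter, mem_univ, true_and] at hm ⊢
    obtain ⟨hdec, hpos, hpar⟩ := hm
    have hv := hval m hpos
    refine ⟨?_, ?_, ?_⟩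
    · intro i j hij
      rw [hv i, hv j]
      have := hdec j.rev i.rev (by rwa [Fin.rev_lt_rev])
      have h1 : (m i.rev : ℕ) < p := (m i.rev).isLt
      have h2 : (m j.rev : ℕ) < p := (m j.rev).isLt
      omega
    · intro j
      rw [hv j]
      have h1 : (m j.rev : ℕ) < p := (m j.rev).isLt
      omega
    · intro j
      rw [hv j]
      have h1 : (m j.rev : ℕ) < p := (m j.rev).isLt
      have h2 := hpar j.rev
      have h3 := hc j.rev
      rw [Fin.rev_rev] at h3
      have h4 := hc2 j
      omega
  · intro m hm
    simp only [mem_filter, mem_univ, true_and] at hm ⊢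
    obtain ⟨hdec, hpos, hpar⟩ := hm
    have hv := hval m hpos
    refine ⟨?_, ?_, ?_⟩
    · intro i j hij
      rw [hv i, hv j]
      have := hdec j.rev i.rev (by rwa [Fin.rev_lt_rev])
      have h1 : (m i.rev : ℕ) < p := (m i.rev).isLt
      have h2 : (m j.rev : ℕ) < p := (m j.rev).isLt
      omega
    · intro j
      rw [hv j]
      have h1 : (m j.rev : ℕ) < p := (m j.rev).isLt
      omega
    · intro j
      rw [hv j]
      have h1 : (m j.rev : ℕ) < p := (m j.rev).isLt
      have h2 := hpar j.rev
      have h3 := hc j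
      have h4 := hc2 j.rev
      omega
  · intro m hm
    simp only [mem_filter, mem_univ, true_and] at hm
    obtain ⟨hdec, hpos, hpar⟩ := hm
    funext j
    have hv := hval m hpos
    have hpos' : ∀ j, 0 < (φ m j : ℕ) := by
      intro j
      rw [hv j]
      have h1 : (m j.rev : ℕ) < p := (m j.rev).isLt
      omega
    have hv2 := hval (φ m) hpos'
    apply Fin.ext
    rw [hv2 j, hv j.rev, Fin.rev_rev]
    have h1 : (m j : ℕ) < p := (m j).isLt
    omega
  · intro m hm
    simp only [mem_filter, mem_univ, true_and] at hm
    obtain ⟨hdec, hpos, hpar⟩ := hm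
    funext j
    have hv := hval m hpos
    have hpos' : ∀ j, 0 < (φ m j : ℕ) := by
      intro j
      rw [hv j]
      have h1 : (m j.rev : ℕ) < p := (m j.rev).isLt
      omega
    have hv2 := hval (φ m) hpos'
    apply Fin.ext
    rw [hv2 j, hv j.rev, Fin.rev_rev]
    have h1 : (m j : ℕ) < p := (m j).isLt
    omega
  · intro m hm
    simp only [mem_filter, mem_univ, true_and] at hm
    obtain ⟨hdec, hpos, hpar⟩ := hm
    have hv := hval m hpos
    have hcast : ∀ j : Fin d, ((φ m j : ℕ) : ZMod p) = -((m j.rev : ℕ) : ZMod p) := by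
      intro j
      rw [hv j, Nat.cast_sub (le_of_lt (m j.rev).isLt), ZMod.natCast_self]
      ring
    have hone : ((-1 : ZMod p) ^ (∑ j, s j)) * ((-1 : ZMod p) ^ (∑ j, s j)) = 1 := by
      rw [← pow_add]
      exact Even.neg_one_pow ⟨∑ j, s j, rfl⟩
    symm
    calc ((-1 : ZMod p) ^ (∑ j, s j)) * ∏ j, (((φ m j : ℕ) : ZMod p))⁻¹ ^ (s j)
        = ((-1 : ZMod p) ^ (∑ j, s j)) *
            ∏ j, ((-1 : ZMod p) ^ (s j) * ((((m j.rev : ℕ)) : ZMod p))⁻¹ ^ (s j)) := by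
          congr 1
          refine Finset.prod_congr rfl fun j _ => ?_
          rw [hcast j, inv_neg, neg_pow]
      _ = ((-1 : ZMod p) ^ (∑ j, s j)) * (((-1 : ZMod p) ^ (∑ j, s j)) *
            ∏ j, ((((m j.rev : ℕ)) : ZMod p))⁻¹ ^ (s j)) := by
          rw [Finset.prod_mul_distrib, Finset.prod_pow_eq_pow_sum]
      _ = ∏ j, ((((m j.rev : ℕ)) : ZMod p))⁻¹ ^ (s j) := by
          rw [← mul_assoc, hone, one_mul]
      _ = ∏ j, (((m j : ℕ) : ZMod p))⁻¹ ^ (s j.rev) := by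
          rw [← Equiv.prod_comp Fin.revPerm
            (fun j => (((m j : ℕ) : ZMod p))⁻¹ ^ (s j.rev))]
          refine Finset.prod_congr rfl fun j _ => ?_
          simp [Fin.rev_rev]

theorem stmt3 (p : ℕ) (hp : p.Prime) (hp2 : p ≠ 2) (d : ℕ) (hd : 1 ≤ d)
    (hde : Even d) (s : Fin d → ℕ) (hs : ∀ j, 0 < s j) :
    Tp p d (fun j => s j.rev) = (-1 : ZMod p) ^ (∑ j, s j) * Tp p d s ∧
    Sp p d (fun j => s j.rev) = (-1 : ZMod p) ^ (∑ j, s j) * Sp p d s := by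
  have hodd : p % 2 = 1 := (hp.eq_two_or_odd).resolve_left hp2
  obtain ⟨k, hk⟩ := hde
  constructor
  · exact key p hp hodd d s (fun j => (d - (j : ℕ)) % 2) (fun j => (d - (j : ℕ)) % 2)
      (fun j => Nat.mod_lt _ (by norm_num))
      (fun j => by
        have h1 : (j.rev : ℕ) = d - 1 - (j : ℕ) := by rw [Fin.val_rev]; omega
        have h2 : (j : ℕ) < d := j.isLt
        simp only [h1]; omega)
  · exact key p hp hodd d s (fun j => (d - (j : ℕ) - 1) % 2) (fun j => (d - (j : ℕ) - 1) % 2)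
      (fun j => Nat.mod_lt _ (by norm_num))
      (fun j => by
        have h1 : (j.rev : ℕ) = d - 1 - (j : ℕ) := by rw [Fin.val_rev]; omega
        have h2 : (j : ℕ) < d := j.isLt
        simp only [h1]; omega)
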